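/- Let R be a ring and let P be a bounded-above cochain complex of pure-projective R-modules. If P is pure-exact, then P is contractible, i.e., P is isomorphic to the zero object in the homotopy category K(R); equivalently, P is a direct sum of contractible complexes of the form ⋯→0→K→K→0→⋯ with the identity map in the middle. -/

import Mathlib

/-!
Common definitions: purity for modules and complexes over an arbitrary ring,
following Cohn's characterization of pure-exact sequences (a short exact sequence
of left `R`-modules is pure-exact iff every morphism from a finitely presented
module to the cokernel lifts, iff it stays exact after tensoring with any right
`R`-module).
-/

open CategoryTheory Limits Pretriangulated ZeroObject

universe u

namespace Paper

variable (R : Type u) [Ring R]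

/-- A surjective morphism of left `R`-modules is a *pure epimorphism* if (equivalently,
by Cohn's theorem, to the exactness of `N ⊗ -` applied to the associated short exact
sequence, for every right `R`-module `N`) every morphism from a finitely presented
module into the target factors through it. -/
def IsPureEpi {B C : ModuleCat.{u} R} (g : B ⟶ C) : Prop :=
  Function.Surjective g ∧
    ∀ (F : ModuleCat.{u} R), Module.FinitePresentation R F →
      ∀ (φ : F ⟶ C), ∃ ψ : F ⟶ B, ψ ≫ g = φ

/-- `0 → A → B → C → 0` (given by `f : A ⟶ B` and `g : B ⟶ C`) is a *pure-exact*
short exact sequence of left `R`-modules. -/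
def IsPureSES {A B C : ModuleCat.{u} R} (f : A ⟶ B) (g : B ⟶ C) : Prop :=
  Function.Injective f ∧ Function.Exact f g ∧ IsPureEpi R g

/-- A left `R`-module `P` is *pure-projective* if `Hom(P,-)` sends every pure-exact
short exact sequence to a short exact sequence (of abelian groups). -/
def PureProjective (P : ModuleCat.{u} R) : Prop :=
  ∀ ⦃A B C : ModuleCat.{u} R⦄ (f : A ⟶ B) (g : B ⟶ C), IsPureSES R f g →
    Function.Injective (fun (φ : P ⟶ A) => φ ≫ f) ∧
    Function.Exact (fun (φ : P ⟶ A) => φ ≫ f) (fun (φ : P ⟶ B) => φ ≫ g) ∧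
    Function.Surjective (fun (φ : P ⟶ B) => φ ≫ g)

/-- cochain complexes of left `R`-modules -/
abbrev Cplx := CochainComplex (ModuleCat.{u} R) ℤ

variable {R}

/-- the inclusion of `Ker (d^n)` into `X^n` -/
def kerIncl (X : Cplx R) (n : ℤ) :
    ModuleCat.of R (LinearMap.ker (X.d n (n+1)).hom) ⟶ X.X n :=
  ModuleCat.ofHom (LinearMap.ker (X.d n (n+1)).hom).subtype

/-- the corestriction `X^n ⟶ Ker (d^{n+1})` of the differential `d^n` -/
def kerCoretr (X : Cplx R) (n : ℤ) :
    X.X n ⟶ ModuleCat.of R (LinearMap.ker (X.d (n+1) (n+2)).hom) :=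
  ModuleCat.ofHom (LinearMap.codRestrict _ (X.d n (n+1)).hom (by
    intro c
    simp only [LinearMap.mem_ker]
    have h' := congrArg (fun (f : X.X n ⟶ X.X (n+2)) => f.hom c) (X.d_comp_d n (n+1) (n+2))
    simpa only [ModuleCat.hom_comp, LinearMap.comp_apply, ModuleCat.hom_zero,
      LinearMap.zero_apply] using h'))

variable (R)

/-- A complex `X` is *pure-acyclic* (pure-exact) if, for every `n`, the short
(exact) sequence `0 → Ker d^n → X^n → Ker d^{n+1} → 0` is pure-exact.
(In particular this includes the exactness of `X`.) -/
def PureAcyclic (X : Cplx R) : Prop :=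
  ∀ n : ℤ, IsPureSES R (kerIncl X n) (kerCoretr X n)

/-- a complex is acyclic (exact) if it is exact at every degree -/
def AcyclicC (X : Cplx R) : Prop := ∀ n : ℤ, X.ExactAt n

/-- bounded above complexes -/
def IsBddAbove (X : Cplx R) : Prop := ∃ b : ℤ, ∀ n : ℤ, b < n → IsZero (X.X n)

/-- bounded complexes -/
def IsBdd (X : Cplx R) : Prop := ∃ a b : ℤ, ∀ n : ℤ, (n < a ∨ b < n) → IsZero (X.X n)

/-- complexes all of whose components are pure-projective -/
def DegreewisePP (X : Cplx R) : Prop := ∀ n : ℤ, PureProjective R (X.X n)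

/-- `H^i (Hom_R(P, X)) = 0`, expressed concretely: every `i`-cocycle of the complex
`Hom_R(P,X)` of abelian groups is an `i`-coboundary. -/
def homExactAt (P : ModuleCat.{u} R) (X : Cplx R) (i : ℤ) : Prop :=
  ∀ (φ : P ⟶ X.X i), φ ≫ X.d i (i+1) = 0 →
    ∃ ψ : P ⟶ X.X (i-1), ψ ≫ X.d (i-1) i = φ

/-- The defining property of objects of `K^{-,ppb}(PP)`: bounded above complexes `X` of
pure-projective modules such that there exists `n` with `H^i Hom_R(P,X) = 0` for all
`i ≤ n` and all pure-projective modules `P`. -/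
def MinusPPB (X : Cplx R) : Prop :=
  IsBddAbove R X ∧ DegreewisePP R X ∧
    ∃ n : ℤ, ∀ i ≤ n, ∀ P : ModuleCat.{u} R, PureProjective R P → homExactAt R P X i

/-! ### Auxiliary lemmas -/

variable {R}

/-- a zero module is a subsingleton -/
lemma subsingleton_of_isZero {M : ModuleCat.{u} R} (h : IsZero M) : Subsingleton M := by
  constructor
  intro a b
  have h1 : (𝟙 M : M ⟶ M) = 0 := h.eq_of_src _ _
  have hz : ∀ x : M, x = 0 := fun x => by
    conv_lhs => rw [show x = (𝟙 M : M ⟶ M) x from rfl]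
    rw [h1]; rfl
  rw [hz a, hz b]

/-- transporting "d applied to an element is zero" along an equality of indices -/
lemma d_apply_eq_zero_iff (X : Cplx R) {a b b' : ℤ} (h : b = b') (x : X.X a) :
    X.d a b x = 0 ↔ X.d a b' x = 0 := by subst h; exact Iff.rfl

/-- `Hom(Q, -)` is left exact on pure short exact sequences (in fact on any
short exact sequence): the injectivity part. -/
lemma hom_injective (Q : ModuleCat.{u} R) {A B C : ModuleCat.{u} R} (f : A ⟶ B) (g : B ⟶ C)
    (h : IsPureSES R f g) :
    Function.Injective (fun (φ : Q ⟶ A) => φ ≫ f) := by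
  intro φ ψ hfg
  apply ModuleCat.hom_ext
  apply LinearMap.ext
  intro x
  apply h.1
  exact congrArg (fun k => k.hom x) hfg

/-- `Hom(Q, -)` is left exact on pure short exact sequences: the exactness part. -/
lemma hom_exact (Q : ModuleCat.{u} R) {A B C : ModuleCat.{u} R} (f : A ⟶ B) (g : B ⟶ C)
    (h : IsPureSES R f g) :
    Function.Exact (fun (φ : Q ⟶ A) => φ ≫ f) (fun (φ : Q ⟶ B) => φ ≫ g) := by
  intro φ
  constructor
  · intro hφ
    have hmem : ∀ x, φ x ∈ LinearMap.range f.hom := by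
      intro x
      have h0 : g (φ x) = 0 := congrArg (fun k => k.hom x) hφ
      obtain ⟨a, ha⟩ := (h.2.1 (φ x)).mp h0
      exact ⟨a, ha⟩
    let e := LinearEquiv.ofInjective f.hom h.1
    refine ⟨ModuleCat.ofHom (e.symm.toLinearMap.comp (LinearMap.codRestrict _ φ.hom hmem)), ?_⟩
    apply ModuleCat.hom_ext
    apply LinearMap.ext
    intro x
    show f (e.symm ⟨φ x, hmem x⟩) = φ x
    have : f.hom (e.symm ⟨φ x, hmem x⟩) = ((e (e.symm ⟨φ x, hmem x⟩)) : B) := rfl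
    rw [show f (e.symm ⟨φ x, hmem x⟩) = ((e (e.symm ⟨φ x, hmem x⟩)) : B) from this,
      e.apply_symm_apply]
  · rintro ⟨ψ, rfl⟩
    apply ModuleCat.hom_ext
    apply LinearMap.ext
    intro x
    show g (f (ψ x)) = 0
    exact h.2.1.apply_apply_eq_zero (ψ x)

/-- pure-projectivity passes to retracts -/
lemma pureProjective_of_retract {A B : ModuleCat.{u} R} (i : A ⟶ B) (r : B ⟶ A)
    (hir : i ≫ r = 𝟙 A) (hB : PureProjective R B) : PureProjective R A := by
  intro X Y Z f g hses
  refine ⟨hom_injective A f g hses, hom_exact A f g hses, ?_⟩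
  intro φ
  obtain ⟨ψ, hψ⟩ := (hB f g hses).2.2 (r ≫ φ)
  refine ⟨i ≫ ψ, ?_⟩
  show (i ≫ ψ) ≫ g = φ
  rw [Category.assoc, show ψ ≫ g = r ≫ φ from hψ, ← Category.assoc, hir, Category.id_comp]

/-- the inclusion of the kernel of `d^{n+1}` (the codomain of `kerCoretr X n`),
as a morphism of `ModuleCat` -/
def kerIncl' (X : Cplx R) (n : ℤ) :
    ModuleCat.of R (LinearMap.ker (X.d (n+1) (n+2)).hom) ⟶ X.X (n+1) :=
  ModuleCat.ofHom (LinearMap.ker (X.d (n+1) (n+2)).hom).subtype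

/-- the inductive step for the existence of splittings: if the corestriction in
degree `n+1` splits, then so does the corestriction in degree `n`. -/
lemma split_step (P : Cplx R) (hpp : DegreewisePP R P) (hpac : PureAcyclic R P) (n : ℤ)
    (h : ∃ σ' : (ModuleCat.of R (LinearMap.ker (P.d (n+1+1) (n+1+2)).hom) ⟶ P.X (n+1)),
      σ' ≫ kerCoretr P (n+1) = 𝟙 _) :
    ∃ σ : (ModuleCat.of R (LinearMap.ker (P.d (n+1) (n+2)).hom) ⟶ P.X n),
      σ ≫ kerCoretr P n = 𝟙 _ := by
  obtain ⟨σ', hσ'⟩ := h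
  have dσ' : ∀ z, P.d (n+1) (n+1+1) (σ' z) = z.1 := by
    intro z
    have h1 : (σ' ≫ kerCoretr P (n+1)) z = z := by rw [hσ']; rfl
    exact congrArg Subtype.val h1
  have hmem : ∀ x : P.X (n+1), x - σ' (kerCoretr P (n+1) x) ∈ LinearMap.ker (P.d (n+1) (n+2)).hom := by
    intro x
    rw [LinearMap.mem_ker, d_apply_eq_zero_iff P (show (n+2 : ℤ) = n+1+1 by ring)]
    rw [map_sub, dσ' (kerCoretr P (n+1) x)]
    exact sub_self (P.d (n+1) (n+1+1) x)
  let u : P.X (n+1) →ₗ[R] P.X (n+1) :=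
    LinearMap.id - (σ'.hom.comp (kerCoretr P (n+1)).hom)
  have hu : ∀ x, u x = x - σ' (kerCoretr P (n+1) x) := fun x => rfl
  let r : P.X (n+1) ⟶ ModuleCat.of R (LinearMap.ker (P.d (n+1) (n+2)).hom) :=
    ModuleCat.ofHom (LinearMap.codRestrict _ u (fun x => by rw [hu]; exact hmem x))
  have hir : kerIncl' P n ≫ r = 𝟙 _ := by
    apply ModuleCat.hom_ext
    apply LinearMap.ext
    intro z
    apply Subtype.ext
    show u z.1 = z.1
    rw [hu]
    have hz : kerCoretr P (n+1) (z.1) = 0 := by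
      apply Subtype.ext
      show P.d (n+1) (n+1+1) z.1 = 0
      exact (d_apply_eq_zero_iff P (show (n+1+1 : ℤ) = n+2 by ring) _).mpr z.2
    rw [hz, map_zero, sub_zero]
  have hZpp : PureProjective R (ModuleCat.of R (LinearMap.ker (P.d (n+1) (n+2)).hom)) :=
    pureProjective_of_retract (kerIncl' P n) r hir (hpp (n+1))
  obtain ⟨σ, hσ⟩ := (hZpp (kerIncl P n) (kerCoretr P n) (hpac n)).2.2 (𝟙 _)
  exact ⟨σ, hσ⟩

/-- **Statement 4** (Lemma 3.3). A bounded above complex of pure-projective modules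
which is pure-exact is contractible, i.e. it is zero in the homotopy category `K(R)`. -/
theorem pureAcyclic_bddAbove_pureProjective_contractible (P : Cplx R)
    (hba : IsBddAbove R P) (hpp : DegreewisePP R P) (hpac : PureAcyclic R P) :
    Nonempty (Homotopy (𝟙 P) 0) ∧
      IsZero ((HomotopyCategory.quotient (ModuleCat.{u} R) (ComplexShape.up ℤ)).obj P) := by
  obtain ⟨b, hb⟩ := hba
  -- every corestriction `X^n → Ker d^{n+1}` splits
  have split : ∀ n : ℤ, ∃ σ : (ModuleCat.of R (LinearMap.ker (P.d (n+1) (n+2)).hom) ⟶ P.X n),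
      σ ≫ kerCoretr P n = 𝟙 _ := by
    have base : ∀ n : ℤ, b ≤ n →
        ∃ σ : (ModuleCat.of R (LinearMap.ker (P.d (n+1) (n+2)).hom) ⟶ P.X n),
          σ ≫ kerCoretr P n = 𝟙 _ := by
      intro n hn
      haveI : Subsingleton (P.X (n+1)) := subsingleton_of_isZero (hb _ (by omega))
      refine ⟨0, ?_⟩
      apply ModuleCat.hom_ext
      apply LinearMap.ext
      intro z
      apply Subtype.ext
      exact Subsingleton.elim _ _
    have key : ∀ m : ℕ, ∀ n : ℤ, b - m ≤ n →
        ∃ σ : (ModuleCat.of R (LinearMap.ker (P.d (n+1) (n+2)).hom) ⟶ P.X n),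
          σ ≫ kerCoretr P n = 𝟙 _ := by
      intro m
      induction m with
      | zero => intro n hn; exact base n (by omega)
      | succ m ih =>
        intro n hn
        by_cases hc : b - m ≤ n
        · exact ih n hc
        · exact split_step P hpp hpac n (ih (n+1) (by omega))
    intro n
    exact key (b - n).toNat n (by omega)
  choose σ hσ using split
  have dσ : ∀ (n : ℤ) (z : LinearMap.ker (P.d (n+1) (n+2)).hom), P.d n (n+1) (σ n z) = z.1 := by
    intro n z
    have h1 : (σ n ≫ kerCoretr P n) z = z := by rw [hσ]; rfl
    exact congrArg Subtype.val h1
  -- the retraction of the inclusion `Ker d^{n+1} ⊆ P^{n+1}`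
  have hmem : ∀ (n : ℤ) (x : P.X (n+1)),
      x - σ (n+1) (kerCoretr P (n+1) x) ∈ LinearMap.ker (P.d (n+1) (n+2)).hom := by
    intro n x
    rw [LinearMap.mem_ker, d_apply_eq_zero_iff P (show (n+2 : ℤ) = n+1+1 by ring)]
    rw [map_sub, dσ (n+1) (kerCoretr P (n+1) x)]
    exact sub_self (P.d (n+1) (n+1+1) x)
  let retr : ∀ n : ℤ, P.X (n+1) ⟶ ModuleCat.of R (LinearMap.ker (P.d (n+1) (n+2)).hom) := fun n =>
    ModuleCat.ofHom (LinearMap.codRestrict _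
      (LinearMap.id - ((σ (n+1)).hom.comp (kerCoretr P (n+1)).hom))
      (fun x => hmem n x))
  have retr_apply : ∀ (n : ℤ) (x : P.X (n+1)),
      Subtype.val (retr n x) = x - σ (n+1) (kerCoretr P (n+1) x) := fun n x => rfl
  -- the contracting homotopy
  let S : ∀ n : ℤ, P.X (n+1) ⟶ P.X n := fun n => retr n ≫ σ n
  have comm : ∀ k : ℤ, (𝟙 (P.X (k+1)) : P.X (k+1) ⟶ P.X (k+1)) =
      P.d (k+1) (k+1+1) ≫ S (k+1) + S k ≫ P.d k (k+1) := by
    intro k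
    apply ModuleCat.hom_ext
    apply LinearMap.ext
    intro x
    show x = S (k+1) (P.d (k+1) (k+1+1) x) + P.d k (k+1) (S k x)
    have h1 : kerCoretr P (k+1+1) (P.d (k+1) (k+1+1) x) = 0 := by
      apply Subtype.ext
      show P.d (k+1+1) (k+1+1+1) (P.d (k+1) (k+1+1) x) = 0
      exact congrArg (fun f => f.hom x) (P.d_comp_d (k+1) (k+1+1) (k+1+1+1))
    have h2 : S (k+1) (P.d (k+1) (k+1+1) x) = σ (k+1) (kerCoretr P (k+1) x) := by
      show σ (k+1) (retr (k+1) (P.d (k+1) (k+1+1) x)) = σ (k+1) (kerCoretr P (k+1) x)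
      congr 1
      apply Subtype.ext
      rw [retr_apply, h1, map_zero, sub_zero]
      rfl
    have h3 : P.d k (k+1) (S k x) = x - σ (k+1) (kerCoretr P (k+1) x) := by
      show P.d k (k+1) (σ k (retr k x)) = _
      rw [dσ k (retr k x), retr_apply]
    rw [h2, h3]
    abel
  have htp : Homotopy (𝟙 P) 0 := by
    refine
      { hom := fun i j =>
          if h : j + 1 = i then eqToHom (congrArg P.X h.symm) ≫ S j else 0
        zero := fun i j hn => dif_neg hn
        comm := ?_ }
    intro i
    obtain ⟨k, rfl⟩ : ∃ k : ℤ, i = k + 1 := ⟨i - 1, by ring⟩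
    rw [dNext_eq _ (show (ComplexShape.up ℤ).Rel (k+1) (k+1+1) from rfl),
      prevD_eq _ (show (ComplexShape.up ℤ).Rel k (k+1) from rfl)]
    rw [dif_pos rfl, dif_pos rfl]
    simp only [eqToHom_refl, Category.id_comp, HomologicalComplex.id_f,
      HomologicalComplex.zero_f, add_zero]
    exact comm k
  refine ⟨⟨htp⟩, (HomotopyCategory.isZero_quotient_obj_iff P).mpr ⟨htp⟩⟩

end Paper
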